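/- If a binary operation • on a set X belongs to ZBin(X), then for all x, y in X with x ≠ y, the set {x, y} equals the set {x • y, y • x}. -/
import Mathlib

/-- A binary operation `•` is in the center `ZBin(X)` if for every binary operation `*`
and all `x, y`, `(x * y) • (y * x) = (x • y) * (y • x)`. -/
def ZBin {X : Type*} (bullet : X → X → X) : Prop :=
  ∀ star : X → X → X, ∀ x y : X,
    bullet (star x y) (star y x) = star (bullet x y) (bullet y x)

/-- If `• ∈ ZBin(X)` then `x ≠ y` implies `{x, y} = {x • y, y • x}`. -/
theorem ZBin.pair_eq {X : Type*} (bullet : X → X → X) (h : ZBin bullet) :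
    ∀ x y : X, x ≠ y → ({x, y} : Set X) = {bullet x y, bullet y x} := by
  intro x y hxy
  classical
  have key : ∀ s t d : X, bullet s t =
      (if bullet x y = x ∧ bullet y x = y then s
       else if bullet x y = y ∧ bullet y x = x then t else d) := by
    intro s t d
    have := h (fun u v => if u = x ∧ v = y then s else if u = y ∧ v = x then t else d) x y
    simpa [hxy, hxy.symm] using this
  by_cases h1 : bullet x y = x ∧ bullet y x = y
  · rw [h1.1, h1.2]
  · by_cases h2 : bullet x y = y ∧ bullet y x = x
    · rw [h2.1, h2.2, Set.pair_comm]
    · exfalso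
      have e1 := key x x x
      have e2 := key x x y
      simp [h1, h2] at e1 e2
      exact hxy (e1.symm.trans e2)
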